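/- Fix x and a conditional distribution over reward vectors (r_1, r_{-1}) ∈ [0,1]², and an action distribution p with p(1), p(-1) > 0. Suppose E[r_1] > E[r_{-1}] and the classifier predicts −1. Then the difference between the expected importance weight of (mis-)label 1 and that of label −1 under the Binary Offset reduction equals E[r_1 − r_{-1}]. That is, E[(1/2 − r_{-1})_+ + (r_1 − 1/2)_+] − E[(1/2 − r_1)_+ + (r_{-1} − 1/2)_+] = E[r_1] − E[r_{-1}], where (z)_+ = max(z,0). -/
import Mathlib


open MeasureTheory

lemma bo_integrable_aux (μ : Measure (ℝ × ℝ)) [IsProbabilityMeasure μ]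
    (hr : ∀ᵐ q ∂μ, q.1 ∈ Set.Icc (0:ℝ) 1 ∧ q.2 ∈ Set.Icc (0:ℝ) 1)
    (f : ℝ × ℝ → ℝ) (hf : Measurable f)
    (hb : ∀ q : ℝ × ℝ, q.1 ∈ Set.Icc (0:ℝ) 1 → q.2 ∈ Set.Icc (0:ℝ) 1 → |f q| ≤ 2) :
    Integrable f μ := by
  refine ⟨hf.aestronglyMeasurable, ?_⟩
  apply HasFiniteIntegral.mono' (g := fun _ => (2:ℝ))
  · exact integrable_const 2 |>.2
  · filter_upwards [hr] with q hq
    exact hb q hq.1 hq.2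

/-- conditioned on `x`, with rewards `(r₁, r₋₁) ∈ [0,1]²` distributed
according to `μ`, an action distribution with `p(1), p(-1) > 0`, `E[r₁] > E[r₋₁]`,
and the classifier predicting `−1`, the difference between the expected importance
weight of label `1` and that of label `−1` under the Binary Offset reduction equals
`E[r₁ − r₋₁]`:
`E[(1/2 − r₋₁)⁺ + (r₁ − 1/2)⁺] − E[(1/2 − r₁)⁺ + (r₋₁ − 1/2)⁺] = E[r₁] − E[r₋₁]`.
Here `q.1 = r₁` and `q.2 = r₋₁`, and `(z)⁺ = max z 0`. -/
theorem binary_offset_importance_regret_identity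
    (μ : Measure (ℝ × ℝ)) [IsProbabilityMeasure μ]
    (hr : ∀ᵐ q ∂μ, q.1 ∈ Set.Icc (0:ℝ) 1 ∧ q.2 ∈ Set.Icc (0:ℝ) 1)
    (p1 pm1 : ℝ) (hp1 : 0 < p1) (hpm1 : 0 < pm1) (hsum : p1 + pm1 = 1)
    (hgt : ∫ q, q.2 ∂μ < ∫ q, q.1 ∂μ)
    (c : ℝ) (hc : c = -1) :
    (∫ q, (max (1/2 - q.2) 0 + max (q.1 - 1/2) 0) ∂μ)
      - (∫ q, (max (1/2 - q.1) 0 + max (q.2 - 1/2) 0) ∂μ)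
    = (∫ q, q.1 ∂μ) - (∫ q, q.2 ∂μ) := by
  have m1 : Measurable fun q : ℝ × ℝ => q.1 := measurable_fst
  have m2 : Measurable fun q : ℝ × ℝ => q.2 := measurable_snd
  have hA : Integrable (fun q : ℝ × ℝ => max (1/2 - q.2) 0 + max (q.1 - 1/2) 0) μ := by
    apply bo_integrable_aux μ hr
    · exact ((measurable_const.sub m2).max measurable_const).add
        ((m1.sub measurable_const).max measurable_const)
    · intro q h1 h2
      simp only [Set.mem_Icc] at h1 h2
      rw [abs_le]
      refine ⟨by nlinarith [le_max_right (1/2 - q.2) (0:ℝ), le_max_right (q.1 - 1/2) (0:ℝ)],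
        by nlinarith [max_le (by linarith : 1/2 - q.2 ≤ (1:ℝ)) (by norm_num : (0:ℝ) ≤ 1),
          max_le (by linarith : q.1 - 1/2 ≤ (1:ℝ)) (by norm_num : (0:ℝ) ≤ 1)]⟩
  have hB : Integrable (fun q : ℝ × ℝ => max (1/2 - q.1) 0 + max (q.2 - 1/2) 0) μ := by
    apply bo_integrable_aux μ hr
    · exact ((measurable_const.sub m1).max measurable_const).add
        ((m2.sub measurable_const).max measurable_const)
    · intro q h1 h2
      simp only [Set.mem_Icc] at h1 h2
      rw [abs_le]
      refine ⟨by nlinarith [le_max_right (1/2 - q.1) (0:ℝ), le_max_right (q.2 - 1/2) (0:ℝ)],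
        by nlinarith [max_le (by linarith : 1/2 - q.1 ≤ (1:ℝ)) (by norm_num : (0:ℝ) ≤ 1),
          max_le (by linarith : q.2 - 1/2 ≤ (1:ℝ)) (by norm_num : (0:ℝ) ≤ 1)]⟩
  have h1i : Integrable (fun q : ℝ × ℝ => q.1) μ := by
    apply bo_integrable_aux μ hr _ m1
    intro q h1 h2; simp only [Set.mem_Icc] at h1; rw [abs_le]; constructor <;> linarith [h1.1, h1.2]
  have h2i : Integrable (fun q : ℝ × ℝ => q.2) μ := by
    apply bo_integrable_aux μ hr _ m2
    intro q h1 h2; simp only [Set.mem_Icc] at h2; rw [abs_le]; constructor <;> linarith [h2.1, h2.2]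
  rw [← integral_sub hA hB, ← integral_sub h1i h2i]
  apply integral_congr_ae
  filter_upwards with q
  have key : ∀ a : ℝ, max (a - 1/2) 0 - max (1/2 - a) 0 = a - 1/2 := by
    intro a
    rcases le_total a (1/2 : ℝ) with h | h
    · rw [max_eq_right (by linarith), max_eq_left (by linarith)]; ring
    · rw [max_eq_left (by linarith), max_eq_right (by linarith)]; ring
  have := key q.1
  have := key q.2
  linarith
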